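/- Given integers a_1, …, a_n, b, define vectors in ℝ^{n+1}: u with u(1) = −b and u(j) = −1 for 2 ≤ j ≤ n+1; v_i with v_i(1) = a_i and v_i(j) = δ_{i+1,j} for 2 ≤ j ≤ n+1; and w_i with w_i(1) = 0 and w_i(j) = δ_{i+1,j}. Set S_i = {v_i, w_i} for i = 1,…,n, S_{n+1} = {u}, S_{n+2} = {0}. Then there exists an index set I ⊆ {1,…,n} with ∑_{i∈I} a_i = b if and only if there exists a hyperplane in ℝ^{n+1} containing one point from each of S_1, …, S_{n+2}. -/

import Mathlib

/-- The vector u of the SubsetSum reduction: first coordinate -b, all others -1. -/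
noncomputable def uVec (n : ℕ) (b : ℤ) : Fin (n + 1) → ℝ :=
  fun j => if (j : ℕ) = 0 then (-b : ℝ) else -1

/-- The vector v_i: first coordinate a_i, coordinate i+1 equal to 1, all others 0. -/
noncomputable def vVec (n : ℕ) (a : Fin n → ℤ) (i : Fin n) : Fin (n + 1) → ℝ :=
  fun j => if (j : ℕ) = 0 then (a i : ℝ) else if (j : ℕ) = (i : ℕ) + 1 then 1 else 0

/-- The vector w_i: first coordinate 0, coordinate i+1 equal to 1, all others 0. -/
noncomputable def wVec (n : ℕ) (i : Fin n) : Fin (n + 1) → ℝ :=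
  fun j => if (j : ℕ) = 0 then 0 else if (j : ℕ) = (i : ℕ) + 1 then 1 else 0

/-- correctness of the SubsetSum reduction: a subset of the a_i sums to b
iff there is a hyperplane in ℝ^{n+1} containing one point of each set
S_i = {v_i, w_i}, S_{n+1} = {u}, S_{n+2} = {0}. -/
theorem stmt6 (n : ℕ) (a : Fin n → ℤ) (b : ℤ) :
    (∃ I : Finset (Fin n), ∑ i ∈ I, a i = b) ↔
      ∃ W : AffineSubspace ℝ (Fin (n + 1) → ℝ),
        Module.finrank ℝ W.direction = n ∧
        (∀ i : Fin n, vVec n a i ∈ W ∨ wVec n i ∈ W) ∧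
        uVec n b ∈ W ∧ (0 : Fin (n + 1) → ℝ) ∈ W := by
  classical
  constructor
  · rintro ⟨I, hI⟩
    -- coefficient vector
    set c : Fin (n + 1) → ℝ :=
      Fin.cases 1 (fun i => if i ∈ I then -(a i : ℝ) else 0) with hc
    -- the linear functional
    set f : (Fin (n + 1) → ℝ) →ₗ[ℝ] ℝ :=
      ∑ j, c j • LinearMap.proj j with hfdef
    have hf : ∀ x, f x = ∑ j, c j * x j := by
      intro x
      simp [hfdef, LinearMap.sum_apply]
    have hsum : ∑ i : Fin n, c i.succ = -(b : ℝ) := by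
      have : ∑ i : Fin n, c i.succ
          = ∑ i : Fin n, (if i ∈ I then -(a i : ℝ) else 0) := by
        simp [hc]
      rw [this, Finset.sum_ite_mem, Finset.univ_inter, Finset.sum_neg_distrib,
        ← Int.cast_sum, hI]
    have hc0 : c 0 = 1 := by simp [hc]
    refine ⟨(LinearMap.ker f).toAffineSubspace, ?_, ?_, ?_, ?_⟩
    · -- rank
      rw [Submodule.toAffineSubspace_direction]
      have hrange : LinearMap.range f = ⊤ := by
        rw [LinearMap.range_eq_top]
        intro y
        refine ⟨y • (Pi.single 0 1 : Fin (n + 1) → ℝ), ?_⟩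
        have h1 : f (Pi.single (0 : Fin (n + 1)) (1 : ℝ)) = 1 := by
          rw [hf, Fin.sum_univ_succ]
          simp [Pi.single_apply, hc0, Fin.succ_ne_zero]
        rw [map_smul, h1, smul_eq_mul, mul_one]
      have hpi : Module.finrank ℝ (Fin (n + 1) → ℝ) = n + 1 := by
        simp [Module.finrank_pi]
      have := LinearMap.finrank_range_add_finrank_ker f
      rw [hrange, finrank_top, hpi, Module.finrank_self] at this
      omega
    · -- v or w in W
      intro i
      by_cases hiI : i ∈ I
      · left
        rw [Submodule.mem_toAffineSubspace, LinearMap.mem_ker, hf, Fin.sum_univ_succ]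
        have hv0 : vVec n a i 0 = (a i : ℝ) := by simp [vVec]
        have hvs : ∀ j : Fin n, vVec n a i j.succ = if j = i then 1 else 0 := by
          intro j
          simp only [vVec, Fin.val_succ]
          rw [if_neg (by omega)]
          by_cases h : j = i
          · subst h; simp
          · rw [if_neg (by simpa [Fin.ext_iff] using h), if_neg h]
        simp only [hv0, hvs, hc0, one_mul, mul_ite, mul_one, mul_zero,
          Finset.sum_ite_eq', Finset.mem_univ, if_true]
        simp [hc, hiI]
      · right
        rw [Submodule.mem_toAffineSubspace, LinearMap.mem_ker, hf, Fin.sum_univ_succ]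
        have hw0 : wVec n i 0 = 0 := by simp [wVec]
        have hws : ∀ j : Fin n, wVec n i j.succ = if j = i then 1 else 0 := by
          intro j
          simp only [wVec, Fin.val_succ]
          rw [if_neg (by omega)]
          by_cases h : j = i
          · subst h; simp
          · rw [if_neg (by simpa [Fin.ext_iff] using h), if_neg h]
        simp only [hw0, hws, mul_zero, zero_add, mul_ite, mul_one,
          Finset.sum_ite_eq', Finset.mem_univ, if_true]
        simp [hc, hiI]
    · -- u in W
      rw [Submodule.mem_toAffineSubspace, LinearMap.mem_ker, hf, Fin.sum_univ_succ]
      have hu0 : uVec n b 0 = -(b : ℝ) := by simp [uVec]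
      have hus : ∀ j : Fin n, uVec n b j.succ = -1 := by
        intro j; simp [uVec, Fin.val_succ]
      simp only [hu0, hus, hc0, one_mul, mul_neg_one]
      have : ∑ x : Fin n, -c x.succ = -∑ x : Fin n, c x.succ :=
        Finset.sum_neg_distrib _
      rw [this, hsum]
      ring
    · -- 0 in W
      rw [Submodule.mem_toAffineSubspace]
      exact (LinearMap.ker f).zero_mem
  · rintro ⟨W, hrank, hS, hu, h0⟩
    -- every point of W lies in its direction
    have hmem : ∀ x, x ∈ W → x ∈ W.direction := by
      intro x hx
      have := AffineSubspace.vsub_mem_direction hx h0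
      simpa using this
    -- the direction is a proper subspace
    have hlt : W.direction < ⊤ := by
      rw [lt_top_iff_ne_top]
      intro htop
      rw [htop, finrank_top] at hrank
      simp [Module.finrank_pi] at hrank
    obtain ⟨f, hf0, hker⟩ :=
      Submodule.exists_dual_map_eq_bot_of_lt_top hlt inferInstance
    have hvanish : ∀ x, x ∈ W → f x = 0 := by
      intro x hx
      have : f x ∈ (W.direction).map f := Submodule.mem_map_of_mem (hmem x hx)
      rwa [hker, Submodule.mem_bot] at this
    set c : Fin (n + 1) → ℝ := fun j => f (fun k => if j = k then 1 else 0) with hc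
    have hfx : ∀ x, f x = ∑ j, x j • c j := by
      intro x
      rw [LinearMap.pi_apply_eq_sum_univ f x]
    -- evaluate on u
    have huval : (-(b : ℝ)) * c 0 + ∑ i : Fin n, (-1) * c i.succ = 0 := by
      have := hvanish _ hu
      rw [hfx] at this
      rw [Fin.sum_univ_succ] at this
      have hu0 : uVec n b 0 = -(b : ℝ) := by simp [uVec]
      have hus : ∀ j : Fin n, uVec n b j.succ = -1 := by
        intro j; simp [uVec, Fin.val_succ]
      simpa [hu0, hus] using this
    -- evaluate on v or w
    have hvw : ∀ i : Fin n, (a i : ℝ) * c 0 + c i.succ = 0 ∨ c i.succ = 0 := by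
      intro i
      rcases hS i with h | h
      · left
        have := hvanish _ h
        rw [hfx, Fin.sum_univ_succ] at this
        have hv0 : vVec n a i 0 = (a i : ℝ) := by simp [vVec]
        have hvs : ∀ j : Fin n, vVec n a i j.succ = if j = i then 1 else 0 := by
          intro j
          simp only [vVec, Fin.val_succ]
          rw [if_neg (by omega)]
          by_cases h : j = i
          · subst h; simp
          · rw [if_neg (by simpa [Fin.ext_iff] using h), if_neg h]
        simpa [hv0, hvs, ite_smul, Finset.sum_ite_eq', smul_eq_mul] using this
      · right
        have := hvanish _ h
        rw [hfx, Fin.sum_univ_succ] at this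
        have hw0 : wVec n i 0 = 0 := by simp [wVec]
        have hws : ∀ j : Fin n, wVec n i j.succ = if j = i then 1 else 0 := by
          intro j
          simp only [wVec, Fin.val_succ]
          rw [if_neg (by omega)]
          by_cases h : j = i
          · subst h; simp
          · rw [if_neg (by simpa [Fin.ext_iff] using h), if_neg h]
        simpa [hw0, hws, ite_smul, Finset.sum_ite_eq', smul_eq_mul] using this
    -- c 0 ≠ 0
    have hc0 : c 0 ≠ 0 := by
      intro hzero
      have hall : ∀ j : Fin (n + 1), c j = 0 := by
        intro j
        refine Fin.cases hzero (fun i => ?_) j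
        rcases hvw i with h | h
        · rw [hzero, mul_zero, zero_add] at h; exact h
        · exact h
      apply hf0
      apply LinearMap.ext
      intro x
      rw [hfx]
      simp [hall]
    set I : Finset (Fin n) := Finset.univ.filter (fun i => c i.succ ≠ 0) with hIdef
    refine ⟨I, ?_⟩
    have hsumI : ∑ i ∈ I, c i.succ = ∑ i : Fin n, c i.succ := by
      rw [hIdef]
      exact Finset.sum_filter_ne_zero Finset.univ
    have haI : ∀ i ∈ I, c i.succ = -((a i : ℝ) * c 0) := by
      intro i hi
      rw [hIdef, Finset.mem_filter] at hi
      rcases hvw i with h | h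
      · linarith
      · exact absurd h hi.2
    have key : (∑ i ∈ I, (a i : ℝ)) * c 0 = (b : ℝ) * c 0 := by
      have h1 : ∑ i ∈ I, c i.succ = -((∑ i ∈ I, (a i : ℝ)) * c 0) := by
        rw [Finset.sum_congr rfl haI, Finset.sum_mul, Finset.sum_neg_distrib]
      have h2 : ∑ i : Fin n, c i.succ = -((b : ℝ) * c 0) := by
        have : ∑ i : Fin n, (-1 : ℝ) * c i.succ = -∑ i : Fin n, c i.succ := by
          simp [Finset.sum_neg_distrib]
        rw [this] at huval
        linarith
      rw [hsumI, h2] at h1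
      linarith
    have := mul_right_cancel₀ hc0 key
    have : ((∑ i ∈ I, a i : ℤ) : ℝ) = ((b : ℤ) : ℝ) := by push_cast; exact this
    exact_mod_cast this
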